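/- Let [b_1,...,b_ℓ] be a T-string and let (a_1,...,a_ℓ) be the unique rational solution of the linear system b_j − 2 = a_{j−1} − a_j b_j + a_{j+1} for all j (with the conventions a_0 = a_{ℓ+1} = 0). Then a_1 + a_ℓ = −1. -/

import Mathlib

/-- The operation `L[b₁,…,b_ℓ] = [2, b₁, …, b_{ℓ-1}, b_ℓ + 1]`. -/
def Lop (l : List ℤ) : List ℤ := 2 :: (l.dropLast ++ [l.getLast! + 1])

/-- The operation `R[b₁,…,b_ℓ] = [b₁+1, b₂, …, b_ℓ, 2]`. -/
def Rop : List ℤ → List ℤ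
  | [] => []
  | a :: t => (a + 1) :: (t ++ [2])

/-- T-strings: generated from `[4]` by the operations `L` and `R`. -/
inductive TString : List ℤ → Prop
  | base : TString [4]
  | left {l : List ℤ} : TString l → TString (Lop l)
  | right {l : List ℤ} : TString l → TString (Rop l)

lemma getLast!_eq_getD (l : List ℤ) (h : l ≠ []) :
    l.getLast! = l.getD (l.length - 1) 0 := by
  have hlen : 0 < l.length := List.length_pos_iff.mpr h
  rw [List.getLast!_of_getLast? (List.getLast?_eq_getLast h),
    List.getD_eq_getElem l 0 (by omega), List.getLast_eq_getElem]

lemma TString.ne_nil {l : List ℤ} (h : TString l) : l ≠ [] := by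
  induction h with
  | base => simp
  | left h ih => simp [Lop]
  | right h ih =>
      rename_i l₀
      match l₀, ih with
      | a :: t, _ => simp [Rop]

lemma TString.mem_ge_two {l : List ℤ} (h : TString l) : ∀ x ∈ l, 2 ≤ x := by
  induction h with
  | base => intro x hx; simp at hx; omega
  | left h ih =>
      rename_i l₀
      intro x hx
      simp only [Lop, List.mem_cons, List.mem_append, List.mem_singleton] at hx
      rcases hx with rfl | hx | (rfl | hx)
      · rfl
      · exact ih x (List.dropLast_subset _ hx)
      case inr.inr.inr => simp at hx
      · have h1 : l₀.getLast! ∈ l₀ := by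
          rw [getLast!_eq_getD l₀ h.ne_nil]
          have hlen : 0 < l₀.length := List.length_pos_iff.mpr h.ne_nil
          rw [List.getD_eq_getElem l₀ 0 (by omega)]
          exact List.getElem_mem _
        have := ih _ h1; omega
  | right h ih =>
      rename_i l₀
      intro x hx
      match l₀, h.ne_nil, ih with
      | a :: t, _, ih =>
        simp only [Rop, List.mem_cons, List.mem_append, List.mem_singleton] at hx
        rcases hx with rfl | hx | (rfl | hx)
        · have := ih a (by simp); omega
        · exact ih x (by simp [hx])
        · rfl
        · simp at hx

-- getD facts for Lop
lemma Lop_length {l : List ℤ} (h : l ≠ []) : (Lop l).length = l.length + 1 := by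
  have : 0 < l.length := List.length_pos_iff.mpr h
  simp [Lop]; omega

lemma Lop_getD_zero (l : List ℤ) : (Lop l).getD 0 0 = 2 := rfl

lemma Lop_getD_mid {l : List ℤ} {k : ℕ} (hk : k < l.length - 1) :
    (Lop l).getD (k + 1) 0 = l.getD k 0 := by
  have h1 : k < l.dropLast.length := by simp [List.length_dropLast]; omega
  have h2 : k < l.length := by omega
  simp only [Lop, List.getD_cons_succ]
  rw [List.getD_append _ _ _ _ h1, List.getD_eq_getElem _ _ h1,
    List.getD_eq_getElem _ _ h2, List.getElem_dropLast]

lemma Lop_getD_last {l : List ℤ} (h : l ≠ []) :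
    (Lop l).getD l.length 0 = l.getD (l.length - 1) 0 + 1 := by
  have hlen : 0 < l.length := List.length_pos_iff.mpr h
  have h1 : l.dropLast.length = l.length - 1 := List.length_dropLast
  simp only [Lop]
  rw [show l.length = (l.length - 1) + 1 by omega, List.getD_cons_succ,
    List.getD_append_right _ _ _ _ (by omega), h1, Nat.sub_self]
  simp [getLast!_eq_getD l h, List.getLast?_eq_getElem?]

-- getD facts for Rop (on a :: t)
lemma Rop_length (a : ℤ) (t : List ℤ) : (Rop (a :: t)).length = t.length + 2 := by
  simp [Rop]

lemma Rop_getD_zero (a : ℤ) (t : List ℤ) :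
    (Rop (a :: t)).getD 0 0 = (a :: t).getD 0 0 + 1 := rfl

lemma Rop_getD_mid (a : ℤ) (t : List ℤ) {k : ℕ} (hk : 1 ≤ k) (hk2 : k ≤ t.length) :
    (Rop (a :: t)).getD k 0 = (a :: t).getD k 0 := by
  obtain ⟨k, rfl⟩ := Nat.exists_eq_add_of_le hk
  simp only [Rop, List.getD_cons_succ, Nat.add_comm 1 k]
  rw [List.getD_append _ _ _ _ (by omega)]

lemma Rop_getD_last (a : ℤ) (t : List ℤ) :
    (Rop (a :: t)).getD (t.length + 1) 0 = 2 := by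
  simp only [Rop, List.getD_cons_succ]
  rw [List.getD_append_right _ _ _ _ (by omega), Nat.sub_self]
  rfl

lemma homog_pos (L : ℕ) (B : ℕ → ℚ) (hB : ∀ j, 1 ≤ j → j ≤ L → 2 ≤ B j)
    (e : ℕ → ℚ) (he0 : e 0 = 0)
    (hrec : ∀ j, 1 ≤ j → j ≤ L → e (j + 1) = e j * B j - e (j - 1))
    (he1 : 0 < e 1) : 0 < e (L + 1) := by
  have key : ∀ j, 1 ≤ j → j ≤ L + 1 → 0 ≤ e (j - 1) ∧ e (j - 1) + e 1 ≤ e j := by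
    intro j h1
    induction j, h1 using Nat.le_induction with
    | base => intro _; simp [he0]
    | succ j hj ihj =>
        intro hjL
        obtain ⟨h1, h2⟩ := ihj (by omega)
        have hej : 0 < e j := by linarith
        have hBj := hB j hj (by omega)
        have := hrec j hj (by omega)
        have hmul : 2 * e j ≤ e j * B j := by nlinarith
        constructor
        · simpa using hej.le
        · simp only [Nat.add_sub_cancel]
          linarith
  obtain ⟨h1, h2⟩ := key (L + 1) (by omega) le_rfl
  simp only [Nat.add_sub_cancel] at h1 h2
  linarith

lemma homog_zero (L : ℕ) (B : ℕ → ℚ) (e : ℕ → ℚ) (he0 : e 0 = 0)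
    (hrec : ∀ j, 1 ≤ j → j ≤ L → e (j + 1) = e j * B j - e (j - 1))
    (he1 : e 1 = 0) : ∀ j, j ≤ L + 1 → e j = 0 := by
  have key : ∀ j, j ≤ L → e j = 0 ∧ e (j + 1) = 0 := by
    intro j
    induction j with
    | zero => exact fun _ => ⟨he0, he1⟩
    | succ j ihj =>
        intro hjL
        obtain ⟨h1, h2⟩ := ihj (by omega)
        refine ⟨h2, ?_⟩
        have := hrec (j + 1) (by omega) hjL
        simp only [Nat.add_sub_cancel] at this
        rw [this, h1, h2]; ring
  intro j hj
  rcases Nat.lt_or_ge j (L + 1) with h | h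
  · exact (key j (by omega)).1
  · have : j = L + 1 := by omega
    rw [this]; exact (key L le_rfl).2

lemma sol_unique (l : List ℤ)
    (hb : ∀ j : ℕ, 1 ≤ j → j ≤ l.length → (2 : ℚ) ≤ ((l.getD (j - 1) 0 : ℤ) : ℚ))
    (a a' : ℕ → ℚ)
    (ha0 : a 0 = 0) (haend : a (l.length + 1) = 0)
    (hsys : ∀ j : ℕ, 1 ≤ j → j ≤ l.length →
      ((l.getD (j - 1) 0 : ℤ) : ℚ) - 2 =
        a (j - 1) - a j * ((l.getD (j - 1) 0 : ℤ) : ℚ) + a (j + 1))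
    (ha0' : a' 0 = 0) (haend' : a' (l.length + 1) = 0)
    (hsys' : ∀ j : ℕ, 1 ≤ j → j ≤ l.length →
      ((l.getD (j - 1) 0 : ℤ) : ℚ) - 2 =
        a' (j - 1) - a' j * ((l.getD (j - 1) 0 : ℤ) : ℚ) + a' (j + 1)) :
    ∀ j, j ≤ l.length + 1 → a j = a' j := by
  set L := l.length with hL
  set B : ℕ → ℚ := fun j => ((l.getD (j - 1) 0 : ℤ) : ℚ) with hBdef
  set d : ℕ → ℚ := fun j => a j - a' j with hd
  have hd0 : d 0 = 0 := by simp [hd, ha0, ha0']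
  have hdend : d (L + 1) = 0 := by simp [hd, haend, haend']
  have hrec : ∀ j, 1 ≤ j → j ≤ L → d (j + 1) = d j * B j - d (j - 1) := by
    intro j h1 h2
    have e1 := hsys j h1 h2
    have e2 := hsys' j h1 h2
    simp only [hd]
    linear_combination e2 - e1
  have hrec' : ∀ j, 1 ≤ j → j ≤ L → (-d ·) (j + 1) = (-d ·) j * B j - (-d ·) (j - 1) := by
    intro j h1 h2
    simp only []
    rw [hrec j h1 h2]; ring
  have hd1 : d 1 = 0 := by
    rcases lt_trichotomy (d 1) 0 with h | h | h
    · have := homog_pos L B hb (-d ·) (by simp [hd0]) hrec' (by simpa using h)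
      simp at this
      linarith [hdend]
    · exact h
    · have := homog_pos L B hb d hd0 hrec h
      linarith [hdend]
  intro j hj
  have := homog_zero L B d hd0 hrec hd1 j hj
  have : a j - a' j = 0 := this
  linarith

lemma exists_sol {l : List ℤ} (h : TString l) :
    ∃ a : ℕ → ℚ, a 0 = 0 ∧ a (l.length + 1) = 0 ∧
      (∀ j : ℕ, 1 ≤ j → j ≤ l.length →
        ((l.getD (j - 1) 0 : ℤ) : ℚ) - 2 =
          a (j - 1) - a j * ((l.getD (j - 1) 0 : ℤ) : ℚ) + a (j + 1)) ∧
      a 1 + a l.length = -1 ∧ -1 < a 1 ∧ a 1 < 0 := by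
  induction h with
  | base =>
      refine ⟨fun j => if j = 1 then -1/2 else 0, by norm_num, by norm_num, ?_,
        by norm_num, by norm_num, by norm_num⟩
      intro j h1 h2
      simp only [List.length_singleton] at h2
      have : j = 1 := by omega
      subst this
      norm_num
  | left h ih =>
      rename_i l₀
      obtain ⟨a, ha0, haend, hsys, hsum, hlb, hub⟩ := ih
      have hne := h.ne_nil
      set L := l₀.length with hLdef
      have hL1 : 1 ≤ L := List.length_pos_iff.mpr hne
      set t : ℚ := a 1 / (1 - a 1) with htdef
      have h1a : (0 : ℚ) < 1 - a 1 := by linarith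
      have ht : t * (1 - a 1) = a 1 := by
        rw [htdef]; field_simp
      have htub : t < 0 := div_neg_of_neg_of_pos hub h1a
      have htlb : -1 < t := by nlinarith
      set c : ℚ := 1 + t with hcdef
      have haL : a L = -1 - a 1 := by linarith
      have hcaL : c * a L = -1 - 2 * t := by
        rw [haL, hcdef]; nlinarith [ht]
      have hca1 : c * a 1 = t := by
        rw [hcdef]; nlinarith [ht]
      clear_value c
      clear_value t
      set a' : ℕ → ℚ := fun j => if 1 ≤ j ∧ j ≤ L + 1 then c * a (j - 1) + t else 0
        with ha'def
      have ha' : ∀ k, 1 ≤ k → k ≤ L + 1 → a' k = c * a (k - 1) + t := by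
        intro k h1 h2; simp only [ha'def]; rw [if_pos ⟨h1, h2⟩]
      have ha'0 : a' 0 = 0 := by simp [ha'def]
      have ha'end : a' (L + 2) = 0 := by
        simp only [ha'def]; rw [if_neg (by omega)]
      have hlen : (Lop l₀).length = L + 1 := Lop_length hne
      have ha'1 : a' 1 = t := by rw [ha' 1 (by omega) (by omega)]; simp [ha0]
      have ha'L1 : a' (L + 1) = -1 - t := by
        rw [ha' (L + 1) (by omega) (by omega)]; simp only [Nat.add_sub_cancel]
        linarith [hcaL]
      refine ⟨a', ha'0, by rw [hlen]; exact ha'end, ?_, ?_, ?_, ?_⟩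
      · rw [hlen]
        intro j hj1 hj2
        obtain ⟨i, rfl⟩ := Nat.exists_eq_add_of_le hj1
        rw [Nat.add_comm 1 i] at hj2 ⊢
        simp only [Nat.add_sub_cancel]
        rcases Nat.eq_zero_or_pos i with rfl | hi1
        · -- j = 1
          rw [show ((Lop l₀).getD 0 0 : ℚ) = 2 by rw [Lop_getD_zero]; norm_num]
          rw [ha'0, ha'1, ha' 2 (by omega) (by omega)]
          simp only [Nat.add_sub_cancel, show (2:ℕ) - 1 = 1 from rfl]
          linarith [hca1]
        · rcases Nat.lt_or_ge i L with hiL | hiL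
          · -- 2 ≤ j ≤ L, i.e. 1 ≤ i ≤ L - 1
            obtain ⟨k, rfl⟩ := Nat.exists_eq_add_of_le hi1
            rw [Nat.add_comm 1 k] at hiL ⊢
            have hmid : (Lop l₀).getD (k + 1) 0 = l₀.getD k 0 := Lop_getD_mid (by omega)
            rw [hmid]
            have hold := hsys (k + 1) (by omega) (by omega)
            simp only [Nat.add_sub_cancel] at hold
            rw [ha' (k + 1) (by omega) (by omega), ha' (k + 2) (by omega) (by omega),
              ha' (k + 3) (by omega) (by omega)]
            simp only [Nat.add_sub_cancel, show k + 2 - 1 = k + 1 from rfl,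
              show k + 3 - 1 = k + 2 from rfl]
            linear_combination c * hold + (2 - ((l₀.getD k 0 : ℤ) : ℚ)) * hcdef
          · -- j = L + 1
            have hiL' : i = L := by omega
            subst hiL'
            rw [show (Lop l₀).getD L 0 = l₀.getD (L - 1) 0 + 1 from Lop_getD_last hne]
            have hold := hsys L (by omega) (by omega)
            rw [ha' L (by omega) (by omega), ha' (L + 1) (by omega) (by omega)]
            simp only [Nat.add_sub_cancel]
            rw [show L + 1 + 1 = L + 2 from rfl, ha'end]
            push_cast
            linear_combination c * hold + hcaL + c * haend +
              (2 - ((l₀.getD (L - 1) 0 : ℤ) : ℚ)) * hcdef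
      · rw [hlen, ha'1, ha'L1]; ring
      · rw [ha'1]; exact htlb
      · rw [ha'1]; exact htub
  | right h ih =>
      rename_i l₀
      obtain ⟨a, ha0, haend, hsys, hsum, hlb, hub⟩ := ih
      match l₀, h.ne_nil, haend, hsys, hsum with
      | hd :: tl, _, haend, hsys, hsum =>
      set L := (hd :: tl).length with hLdef
      have hL1 : 1 ≤ L := by simp [hLdef]
      have hLtl : L = tl.length + 1 := by simp [hLdef]
      have haL : a L = -1 - a 1 := by linarith
      have haLub : a L < 0 := by rw [haL]; linarith
      have haLlb : -1 < a L := by rw [haL]; linarith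
      set s : ℚ := a L / (1 - a L) with hsdef
      have h1a : (0 : ℚ) < 1 - a L := by linarith
      have hts : s * (1 - a L) = a L := by rw [hsdef]; field_simp
      have hsub : s < 0 := div_neg_of_neg_of_pos haLub h1a
      have hslb : -1 < s := by nlinarith
      set c : ℚ := 1 + s with hcdef
      have hcaL : c * a L = s := by rw [hcdef]; nlinarith [hts]
      have hca1 : c * a 1 = -1 - 2 * s := by
        rw [haL] at hcaL; linear_combination (-1 : ℚ) * hcaL - hcdef
      clear_value c
      clear_value s
      set a' : ℕ → ℚ := fun j => if 1 ≤ j ∧ j ≤ L + 1 then c * a j + s else 0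
        with ha'def
      have ha' : ∀ k, 1 ≤ k → k ≤ L + 1 → a' k = c * a k + s := by
        intro k h1 h2; simp only [ha'def]; rw [if_pos ⟨h1, h2⟩]
      have ha'0 : a' 0 = 0 := by simp [ha'def]
      have ha'end : a' (L + 2) = 0 := by
        simp only [ha'def]; rw [if_neg (by omega)]
      have hlen : (Rop (hd :: tl)).length = L + 1 := by
        rw [Rop_length, hLtl]
      have ha'1 : a' 1 = -1 - s := by
        rw [ha' 1 (by omega) (by omega)]; linarith [hca1]
      have ha'L1 : a' (L + 1) = s := by
        rw [ha' (L + 1) (by omega) (by omega), haend]; ring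
      refine ⟨a', ha'0, by rw [hlen]; exact ha'end, ?_, ?_, ?_, ?_⟩
      · rw [hlen]
        intro j hj1 hj2
        obtain ⟨i, rfl⟩ := Nat.exists_eq_add_of_le hj1
        rw [Nat.add_comm 1 i] at hj2 ⊢
        simp only [Nat.add_sub_cancel]
        rcases Nat.eq_zero_or_pos i with rfl | hi1
        · -- j = 1
          have hgd : (Rop (hd :: tl)).getD 0 0 = (hd :: tl).getD 0 0 + 1 :=
            Rop_getD_zero hd tl
          rw [hgd]
          have hold := hsys 1 (by omega) (by omega)
          simp only [show (1:ℕ) - 1 = 0 from rfl] at hold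
          rw [ha'0, ha' 1 (by omega) (by omega), ha' 2 (by omega) (by omega)]
          push_cast
          push_cast at hold
          linear_combination c * hold + hca1 + c * ha0 +
            (2 - ((hd :: tl).getD 0 0 : ℚ)) * hcdef
        · rcases Nat.lt_or_ge i L with hiL | hiL
          · -- 2 ≤ j ≤ L
            have hmid : (Rop (hd :: tl)).getD i 0 = (hd :: tl).getD i 0 :=
              Rop_getD_mid hd tl hi1 (by omega)
            rw [hmid]
            have hold := hsys (i + 1) (by omega) (by omega)
            simp only [Nat.add_sub_cancel] at hold
            rw [ha' i (by omega) (by omega), ha' (i + 1) (by omega) (by omega),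
              ha' (i + 2) (by omega) (by omega)]
            linear_combination c * hold + (2 - (((hd :: tl).getD i 0 : ℤ) : ℚ)) * hcdef
          · -- j = L + 1
            have hiL' : i = L := by omega
            subst hiL'
            have hgd : (Rop (hd :: tl)).getD L 0 = 2 := by
              rw [hLtl]; exact Rop_getD_last hd tl
            rw [hgd]
            rw [ha' L (by omega) (by omega), ha'L1]
            rw [show L + 1 + 1 = L + 2 from rfl, ha'end]
            push_cast
            linear_combination (-1 : ℚ) * hcaL
      · rw [hlen, ha'1, ha'L1]; ring
      · rw [ha'1]; linarith
      · rw [ha'1]; linarith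

/-- Let `[b₁,…,b_ℓ]` be a T-string and `(a₁,…,a_ℓ)` the (discrepancy) solution
of the linear system `bⱼ - 2 = a_{j-1} - aⱼ bⱼ + a_{j+1}` for `1 ≤ j ≤ ℓ`,
with the conventions `a₀ = a_{ℓ+1} = 0`.  Then `a₁ + a_ℓ = -1`.
Here `bⱼ = l.getD (j-1) 0` (lists are 0-indexed). -/
theorem discrepancy_ends (l : List ℤ) (h : TString l) (a : ℕ → ℚ)
    (ha0 : a 0 = 0) (haend : a (l.length + 1) = 0)
    (hsys : ∀ j : ℕ, 1 ≤ j → j ≤ l.length →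
      ((l.getD (j - 1) 0 : ℤ) : ℚ) - 2 =
        a (j - 1) - a j * ((l.getD (j - 1) 0 : ℤ) : ℚ) + a (j + 1)) :
    a 1 + a l.length = -1 := by
  obtain ⟨b, hb0, hbend, hbsys, hbsum, _, _⟩ := exists_sol h
  have hb : ∀ j : ℕ, 1 ≤ j → j ≤ l.length → (2 : ℚ) ≤ ((l.getD (j - 1) 0 : ℤ) : ℚ) := by
    intro j h1 h2
    have hj : j - 1 < l.length := by omega
    rw [List.getD_eq_getElem l 0 hj]
    have := h.mem_ge_two _ (List.getElem_mem hj)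
    exact_mod_cast this
  have huniq := sol_unique l hb a b ha0 haend hsys hb0 hbend hbsys
  rw [huniq 1 (by omega), huniq l.length (by omega)]
  exact hbsum
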